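/- Let V be a vector space over a field K of characteristic zero, let A = T(V)₊ be the augmentation ideal of the tensor algebra T(V) (the span of words of positive length), viewed as a nonunital associative algebra under concatenation, and let * denote the unique extension of the concatenation product of A to the tensor algebra T(A). Then for all n, k ≥ 1 and all S₁, …, Sₙ, W₁, …, W_k ∈ A, writing S = S₁|…|Sₙ and W = W₁|…|W_k for the corresponding words in T(A) (| the product of T(A)): S * W = Σ_{f : {1,…,k} ↪ {1,…,n}} (S₁*W_{f⁻¹(1)})|…|(Sₙ*W_{f⁻¹(n)}), where the sum is over injective maps f, and for each i, Sᵢ*W_{f⁻¹(i)} means Sᵢ if f⁻¹(i) = ∅, and the concatenation Sᵢ·W_j in T(V) if f⁻¹(i) = {j}. In particular S * W = 0 if k > n. -/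

import Mathlib

open TensorProduct

/-- The counit of the tensor algebra `T(V)`: the unique algebra morphism `T(V) → K`
vanishing on `V`. -/
noncomputable def taCounit (K V : Type*) [Field K] [AddCommGroup V] [Module K V] :
    TensorAlgebra K V →ₐ[K] K :=
  TensorAlgebra.lift K (0 : V →ₗ[K] K)

/-- The unshuffle coproduct of the tensor algebra `T(V)`: the unique algebra morphism
`T(V) → T(V) ⊗ T(V)` with `Δ(v) = v ⊗ 1 + 1 ⊗ v` for `v ∈ V`. -/
noncomputable def taComul (K V : Type*) [Field K] [AddCommGroup V] [Module K V] :
    TensorAlgebra K V →ₐ[K] TensorAlgebra K V ⊗[K] TensorAlgebra K V :=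
  TensorAlgebra.lift K
    (((TensorProduct.mk K (TensorAlgebra K V) (TensorAlgebra K V)).flip 1
        + TensorProduct.mk K (TensorAlgebra K V) (TensorAlgebra K V) 1)
      ∘ₗ TensorAlgebra.ι K)

/-- The augmentation ideal `T(V)₊ = ker ε` of the tensor algebra, i.e. the span of words
of positive length, as a `K`-submodule of `T(V)`. -/
noncomputable def augIdeal (K V : Type*) [Field K] [AddCommGroup V] [Module K V] :
    Submodule K (TensorAlgebra K V) :=
  LinearMap.ker (taCounit K V).toLinearMap

/-- Concatenation of `T(V)` restricted to the augmentation ideal `T(V)₊`, making it a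
nonunital associative algebra. -/
noncomputable def augMul (K V : Type*) [Field K] [AddCommGroup V] [Module K V] :
    augIdeal K V →ₗ[K] augIdeal K V →ₗ[K] augIdeal K V :=
  LinearMap.mk₂ K
    (fun a b => ⟨(a : TensorAlgebra K V) * (b : TensorAlgebra K V), by
      have ha : taCounit K V (a : TensorAlgebra K V) = 0 := a.2
      simp [augIdeal, LinearMap.mem_ker, ha]⟩)
    (fun a a' b => by ext : 1; simp [add_mul])
    (fun c a b => by ext : 1; simp [smul_mul_assoc])
    (fun a b b' => by ext : 1; simp [mul_add])
    (fun c a b => by ext : 1; simp [mul_smul_comm])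

-- AUX START
lemma taComul_ι (K V : Type*) [Field K] [AddCommGroup V] [Module K V] (v : V) :
    taComul K V (TensorAlgebra.ι K v)
      = TensorAlgebra.ι K v ⊗ₜ[K] 1 + 1 ⊗ₜ[K] TensorAlgebra.ι K v := by
  simp [taComul]

lemma augMul_assoc {K V : Type*} [Field K] [AddCommGroup V] [Module K V]
    (a b c : augIdeal K V) :
    augMul K V (augMul K V a b) c = augMul K V a (augMul K V b c) :=
  Subtype.ext (mul_assoc (a : TensorAlgebra K V) b c)

section Aux
variable {K V : Type*} [Field K] [AddCommGroup V] [Module K V]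
  (B : TensorAlgebra K (augIdeal K V) →ₗ[K]
        TensorAlgebra K (augIdeal K V) →ₗ[K] TensorAlgebra K (augIdeal K V))

lemma leibniz
    (hone : ∀ f, B f 1 = f)
    (hmul : ∀ f g h, B (f * g) h
        = TensorProduct.lift
            ((LinearMap.mul K (TensorAlgebra K (augIdeal K V))).compl₁₂ (B f) (B g))
            (taComul K (augIdeal K V) h))
    (f g : TensorAlgebra K (augIdeal K V)) (y : augIdeal K V) :
    B (f * g) (TensorAlgebra.ι K y)
      = B f (TensorAlgebra.ι K y) * g + f * B g (TensorAlgebra.ι K y) := by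
  rw [hmul, taComul_ι]
  simp [hone]

lemma derivB
    (hagree : ∀ a b : augIdeal K V,
      B (TensorAlgebra.ι K a) (TensorAlgebra.ι K b) = TensorAlgebra.ι K (augMul K V a b))
    (hone : ∀ f, B f 1 = f)
    (hmul : ∀ f g h, B (f * g) h
        = TensorProduct.lift
            ((LinearMap.mul K (TensorAlgebra K (augIdeal K V))).compl₁₂ (B f) (B g))
            (taComul K (augIdeal K V) h)) :
    ∀ (m : ℕ) (T : Fin (m + 1) → augIdeal K V) (y : augIdeal K V),
    B ((List.ofFn fun i => TensorAlgebra.ι K (T i)).prod) (TensorAlgebra.ι K y)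
      = ∑ i : Fin (m + 1),
          (List.ofFn fun i' => TensorAlgebra.ι K
            (if i' = i then augMul K V (T i') y else T i')).prod := by
  intro m
  induction m with
  | zero =>
    intro T y
    simp [List.ofFn_succ, hagree]
  | succ m IH =>
    intro T y
    rw [List.ofFn_succ, List.prod_cons, leibniz B hone hmul, hagree,
      IH (fun i => T i.succ) y, Finset.mul_sum]
    conv_rhs => rw [Fin.sum_univ_succ]
    congr 1
    · conv_rhs => rw [List.ofFn_succ, List.prod_cons]
      congr 1
    · refine Finset.sum_congr rfl fun i _ => ?_
      conv_rhs => rw [List.ofFn_succ, List.prod_cons]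
      congr 1
      · have h0 : ¬((0 : Fin (m + 2)) = i.succ) := Ne.symm (Fin.succ_ne_zero i)
        simp [h0, Fin.succ_inj]

end Aux

def extEmb {n k : ℕ}
    (q : Σ f : Fin (k + 1) ↪ Fin (n + 1), {i : Fin (n + 1) // ∀ j, f j ≠ i}) :
    Fin (k + 2) ↪ Fin (n + 1) :=
  ⟨Fin.snoc (⇑q.1) q.2.1, by
    intro a b h
    induction a using Fin.lastCases with
    | last =>
      induction b using Fin.lastCases with
      | last => rfl
      | cast b =>
        rw [Fin.snoc_last, Fin.snoc_castSucc] at h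
        exact absurd h.symm (q.2.2 b)
    | cast a =>
      induction b using Fin.lastCases with
      | last =>
        rw [Fin.snoc_last, Fin.snoc_castSucc] at h
        exact absurd h (q.2.2 a)
      | cast b =>
        rw [Fin.snoc_castSucc, Fin.snoc_castSucc] at h
        exact congrArg Fin.castSucc (q.1.injective h)⟩

lemma extEmb_castSucc {n k : ℕ}
    (q : Σ f : Fin (k + 1) ↪ Fin (n + 1), {i : Fin (n + 1) // ∀ j, f j ≠ i})
    (j : Fin (k + 1)) : extEmb q j.castSucc = q.1 j := by
  show Fin.snoc (α := fun _ => Fin (n + 1)) (⇑q.1) q.2.1 j.castSucc = q.1 j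
  simp [extEmb, Function.Embedding.coeFn_mk]

lemma extEmb_last {n k : ℕ}
    (q : Σ f : Fin (k + 1) ↪ Fin (n + 1), {i : Fin (n + 1) // ∀ j, f j ≠ i}) :
    extEmb q (Fin.last (k + 1)) = q.2.1 := by
  show Fin.snoc (α := fun _ => Fin (n + 1)) (⇑q.1) q.2.1 (Fin.last (k + 1)) = q.2.1
  simp [extEmb, Function.Embedding.coeFn_mk]

lemma extEmb_bijective {n k : ℕ} :
    Function.Bijective
      (extEmb : (Σ f : Fin (k + 1) ↪ Fin (n + 1), {i : Fin (n + 1) // ∀ j, f j ≠ i})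
        → (Fin (k + 2) ↪ Fin (n + 1))) := by
  constructor
  · rintro ⟨f, i, hi⟩ ⟨g, j, hj⟩ h
    have h' : ∀ x, extEmb ⟨f, i, hi⟩ x = extEmb ⟨g, j, hj⟩ x :=
      fun x => DFunLike.congr_fun h x
    have hfg : f = g := by
      ext x
      have := h' x.castSucc
      rwa [extEmb_castSucc, extEmb_castSucc, Fin.ext_iff] at this
    have hij : i = j := by
      have := h' (Fin.last (k + 1))
      rwa [extEmb_last, extEmb_last] at this
    subst hfg; subst hij
    rfl
  · intro g
    refine ⟨⟨⟨fun j => g j.castSucc,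
        fun a b hab => Fin.castSucc_injective _ (g.injective hab)⟩,
        g (Fin.last (k + 1)),
        fun j hj => absurd (g.injective hj) (Fin.ne_of_lt (Fin.castSucc_lt_last j))⟩, ?_⟩
    ext x
    induction x using Fin.lastCases with
    | last => rw [extEmb_last]
    | cast x => rw [extEmb_castSucc]; rfl

lemma choose_eq {α β : Type*} (f : α ↪ β) {i : β} (h : ∃ j, f j = i) {j : α}
    (hj : f j = i) : h.choose = j :=
  f.injective (h.choose_spec.trans hj.symm)

lemma combin {β : Type*} [AddCommGroup β] {n k : ℕ}
    (P : (Fin (k + 1) ↪ Fin (n + 1)) → Fin (n + 1) → β)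
    (Q : Fin (k + 1) → (Fin (k + 1) ↪ Fin (n + 1)) → β)
    (R : (Fin (k + 2) ↪ Fin (n + 1)) → β)
    (hPQ : ∀ f j, P f (f j) = Q j f)
    (hPR : ∀ (f : Fin (k + 1) ↪ Fin (n + 1)) (i : Fin (n + 1)) (hi : ∀ j, f j ≠ i),
      P f i = R (extEmb ⟨f, ⟨i, hi⟩⟩)) :
    ((∑ f, ∑ i, P f i) - ∑ j, ∑ f, Q j f) = ∑ g, R g := by
  have hsplit : ∀ f, (∑ i, P f i)
      = (∑ i ∈ Finset.univ \ Finset.univ.map f, P f i) + ∑ j, Q j f := by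
    intro f
    rw [← Finset.sum_sdiff (Finset.subset_univ (Finset.univ.map f))]
    congr 1
    rw [Finset.sum_map]
    exact Finset.sum_congr rfl fun j _ => hPQ f j
  rw [Finset.sum_congr rfl fun f _ => hsplit f, Finset.sum_add_distrib,
    Finset.sum_comm, add_sub_cancel_right]
  have hsub : ∀ f : Fin (k + 1) ↪ Fin (n + 1),
      (∑ i ∈ Finset.univ \ Finset.univ.map f, P f i)
        = ∑ i : {i : Fin (n + 1) // ∀ j, f j ≠ i}, P f i.1 := by
    intro f
    refine Finset.sum_subtype _ (fun x => ?_) _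
    simp [not_exists]
  rw [Finset.sum_congr rfl fun f _ => hsub f]
  have hbij : ∑ g, R g
      = ∑ q : Σ f : Fin (k + 1) ↪ Fin (n + 1), {i : Fin (n + 1) // ∀ j, f j ≠ i},
          P q.1 q.2.1 :=
    (Fintype.sum_bijective extEmb extEmb_bijective _ R fun q => by
      rcases q with ⟨f, i, hi⟩; exact hPR f i hi).symm
  rw [hbij, ← Finset.univ_sigma_univ, Finset.sum_sigma]

/-- Let `A = T(V)₊` with concatenation, and let `B` be the unique
extension (characterized by properties (i)–(vii)) of this product to the tensor algebra
`T(A)` (whose product is written `*`, playing the role of `|`).  Then for sentences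
`S = S₀|…|Sₙ` and `W = W₀|…|W_k`,
`S * W = Σ_{f : {0,…,k} ↪ {0,…,n}} (S₀*W_{f⁻¹(0)})|…|(Sₙ*W_{f⁻¹(n)})`,
and `S * W = 0` whenever `k > n`. -/
theorem statement19 {K V : Type*} [Field K] [CharZero K] [AddCommGroup V] [Module K V]
    (B : TensorAlgebra K (augIdeal K V) →ₗ[K]
          TensorAlgebra K (augIdeal K V) →ₗ[K] TensorAlgebra K (augIdeal K V))
    (hagree : ∀ a b : augIdeal K V,
      B (TensorAlgebra.ι K a) (TensorAlgebra.ι K b) = TensorAlgebra.ι K (augMul K V a b))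
    (hcounit : ∀ f g, taCounit K (augIdeal K V) (B f g)
        = taCounit K (augIdeal K V) f * taCounit K (augIdeal K V) g)
    (hcomul : ∀ f g, taComul K (augIdeal K V) (B f g)
        = TensorProduct.map₂ B B (taComul K (augIdeal K V) f) (taComul K (augIdeal K V) g))
    (hone : ∀ f, B f 1 = f)
    (hone' : ∀ f, B 1 f
        = taCounit K (augIdeal K V) f • (1 : TensorAlgebra K (augIdeal K V)))
    (hword : ∀ f g (y : augIdeal K V), B f (g * TensorAlgebra.ι K y)
        = B (B f g) (TensorAlgebra.ι K y) - B f (B g (TensorAlgebra.ι K y)))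
    (hmul : ∀ f g h, B (f * g) h
        = TensorProduct.lift
            ((LinearMap.mul K (TensorAlgebra K (augIdeal K V))).compl₁₂ (B f) (B g))
            (taComul K (augIdeal K V) h))
    (hBB : ∀ f g h, B (B f g) h
        = B f (TensorProduct.lift
            ((LinearMap.mul K (TensorAlgebra K (augIdeal K V))).compl₁₂ (B g) LinearMap.id)
            (taComul K (augIdeal K V) h))) :
    ∀ (n k : ℕ) (S : Fin (n + 1) → augIdeal K V) (W : Fin (k + 1) → augIdeal K V),
      (B ((List.ofFn fun i => TensorAlgebra.ι K (S i)).prod)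
          ((List.ofFn fun j => TensorAlgebra.ι K (W j)).prod)
        = ∑ f : Fin (k + 1) ↪ Fin (n + 1),
            (List.ofFn fun i => TensorAlgebra.ι K
              (if h : ∃ j, f j = i then augMul K V (S i) (W h.choose) else S i)).prod)
      ∧ (n < k →
          B ((List.ofFn fun i => TensorAlgebra.ι K (S i)).prod)
              ((List.ofFn fun j => TensorAlgebra.ι K (W j)).prod) = 0) := by
  suffices main : ∀ (n k : ℕ) (S : Fin (n + 1) → augIdeal K V)
      (W : Fin (k + 1) → augIdeal K V),
      B ((List.ofFn fun i => TensorAlgebra.ι K (S i)).prod)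
          ((List.ofFn fun j => TensorAlgebra.ι K (W j)).prod)
        = ∑ f : Fin (k + 1) ↪ Fin (n + 1),
            (List.ofFn fun i => TensorAlgebra.ι K
              (if h : ∃ j, f j = i then augMul K V (S i) (W h.choose) else S i)).prod by
    intro n k S W
    refine ⟨main n k S W, fun hlt => ?_⟩
    rw [main n k S W]
    haveI : IsEmpty (Fin (k + 1) ↪ Fin (n + 1)) :=
      Function.Embedding.isEmpty_of_card_lt (by simpa using Nat.succ_lt_succ hlt)
    rw [Finset.univ_eq_empty, Finset.sum_empty]
  intro n k
  induction k with
  | zero =>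
    intro S W
    have hW : (List.ofFn fun j : Fin (0 + 1) => TensorAlgebra.ι K (W j)).prod
        = TensorAlgebra.ι K (W 0) := by simp [List.ofFn_succ]
    have hj0 : ∀ j : Fin (0 + 1), j = 0 := fun j => Fin.ext (by omega)
    rw [hW, derivB B hagree hone hmul n S (W 0)]
    refine Fintype.sum_bijective
      (fun i : Fin (n + 1) =>
        (⟨fun _ => i, fun a b _ => (hj0 a).trans (hj0 b).symm⟩ : Fin (0 + 1) ↪ Fin (n + 1)))
      ⟨fun a b h => DFunLike.congr_fun h 0,
        fun f => ⟨f 0, Function.Embedding.ext fun j => by rw [hj0 j]; rfl⟩⟩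
      _ _ fun i => ?_
    refine congrArg _ (congrArg _ (funext fun i' => congrArg _ ?_))
    by_cases hii : i' = i
    · rw [if_pos hii, dif_pos ⟨0, hii.symm⟩]
      exact congrArg (fun w => augMul K V (S i') (W w)) (Eq.symm (hj0 _))
    · rw [if_neg hii, dif_neg]
      rintro ⟨j, hj⟩
      exact hii hj.symm
  | succ k IH =>
    intro S W
    have hW : (List.ofFn fun j : Fin (k + 1 + 1) => TensorAlgebra.ι K (W j)).prod
        = (List.ofFn fun j : Fin (k + 1) => TensorAlgebra.ι K (W j.castSucc)).prod
          * TensorAlgebra.ι K (W (Fin.last (k + 1))) := by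
      rw [List.ofFn_succ' fun j => TensorAlgebra.ι K (W j), List.prod_concat]
    rw [hW, hword]
    simp only [map_sum, LinearMap.sum_apply, derivB B hagree hone hmul, IH S]
    refine combin _ _ _ (fun f j => ?_) (fun f i hi => ?_)
    · refine congrArg _ (congrArg _ (funext fun i' => congrArg _ ?_))
      by_cases hij : i' = f j
      · have hex : ∃ j', f j' = i' := ⟨j, hij.symm⟩
        rw [if_pos hij, dif_pos hex, dif_pos hex, choose_eq f hex hij.symm, if_pos rfl,
          augMul_assoc]
      · rw [if_neg hij]
        by_cases hex : ∃ j', f j' = i'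
        · have hcj : hex.choose ≠ j := by
            intro h
            apply hij
            rw [← hex.choose_spec, h]
          rw [dif_pos hex, dif_pos hex, if_neg hcj]
        · rw [dif_neg hex, dif_neg hex]
    · refine congrArg _ (congrArg _ (funext fun i' => congrArg _ ?_))
      by_cases hii : i' = i
      · have hnex : ¬∃ j, f j = i' := by
          rintro ⟨j, hj⟩
          exact hi j (by rw [hj]; exact hii)
        have hlast : extEmb ⟨f, ⟨i, hi⟩⟩ (Fin.last (k + 1)) = i' := by
          rw [extEmb_last]; exact hii.symm
        have hex : ∃ j, extEmb ⟨f, ⟨i, hi⟩⟩ j = i' := ⟨_, hlast⟩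
        rw [if_pos hii, dif_neg hnex, dif_pos hex, choose_eq _ hex hlast]
      · rw [if_neg hii]
        by_cases hex : ∃ j', f j' = i'
        · have hcast : extEmb ⟨f, ⟨i, hi⟩⟩ hex.choose.castSucc = i' := by
            rw [extEmb_castSucc]; exact hex.choose_spec
          have hex' : ∃ j, extEmb ⟨f, ⟨i, hi⟩⟩ j = i' := ⟨_, hcast⟩
          rw [dif_pos hex, dif_pos hex', choose_eq _ hex' hcast]
        · have hnex' : ¬∃ j, extEmb ⟨f, ⟨i, hi⟩⟩ j = i' := by
            rintro ⟨j, hj⟩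
            induction j using Fin.lastCases with
            | last => rw [extEmb_last] at hj; exact hii hj.symm
            | cast j => rw [extEmb_castSucc] at hj; exact hex ⟨j, hj⟩
          rw [dif_neg hex, dif_neg hnex']
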